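/- For positive integers n, m ≥ 2 define g(t) = (1 + t√(2m/(n(n+m))))ⁿ · (1 - t√(2n/(m(n+m))))ᵐ for t in the interval where both factors are nonnegative, and g(t) = 0 otherwise. Then g(t) ≤ e^{1-|t|} for all t ∈ ℝ. -/

import Mathlib

/-- `1 + x ≤ exp(x - x²/(2(1+x)))` for `x ≥ 0`. -/
lemma one_add_le_exp_quad (x : ℝ) (hx : 0 ≤ x) :
    1 + x ≤ Real.exp (x - x ^ 2 / (2 * (1 + x))) := by
  have h1 : (0:ℝ) < 1 + x := by linarith
  set w := x - x ^ 2 / (2 * (1 + x)) with hw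
  have hw0 : 0 ≤ w := by
    rw [hw, sub_nonneg, div_le_iff₀ (by positivity)]
    nlinarith
  have h2 := Real.quadratic_le_exp_of_nonneg hw0
  have e2 : w + w ^ 2 / 2 = x + x ^ 4 / (8 * (1 + x) ^ 2) := by
    rw [hw]; field_simp; ring
  have h4 : 0 ≤ x ^ 4 / (8 * (1 + x) ^ 2) := by positivity
  linarith

/-- `1 - y ≤ exp(-y - y²/4)` for `y ∈ [0,1]`. -/
lemma one_sub_le_exp_quad (y : ℝ) (hy : 0 ≤ y) (hy1 : y ≤ 1) :
    1 - y ≤ Real.exp (-y - y ^ 2 / 4) := by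
  have h1 : 0 ≤ 1 - (y / 2 + y ^ 2 / 8) := by nlinarith
  have h2 : 1 - (y / 2 + y ^ 2 / 8) ≤ Real.exp (-(y / 2 + y ^ 2 / 8)) := by
    linarith [Real.add_one_le_exp (-(y / 2 + y ^ 2 / 8))]
  calc 1 - y ≤ (1 - (y / 2 + y ^ 2 / 8)) ^ 2 := by
        nlinarith [pow_nonneg hy 3, pow_nonneg hy 4]
    _ ≤ Real.exp (-(y / 2 + y ^ 2 / 8)) ^ 2 := pow_le_pow_left₀ h1 h2 2
    _ = Real.exp (-y - y ^ 2 / 4) := by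
        rw [sq, ← Real.exp_add]; congr 1; ring

set_option maxHeartbeats 1000000 in
lemma aux_bound (n m : ℕ) (hn : 2 ≤ n) (hm : 2 ≤ m) (t : ℝ) (ht : 0 ≤ t)
    (hB : 0 ≤ 1 - t * Real.sqrt (2 * (n:ℝ) / ((m:ℝ) * ((n:ℝ) + (m:ℝ))))) :
    (1 + t * Real.sqrt (2 * (m:ℝ) / ((n:ℝ) * ((n:ℝ) + (m:ℝ))))) ^ n *
      (1 - t * Real.sqrt (2 * (n:ℝ) / ((m:ℝ) * ((n:ℝ) + (m:ℝ))))) ^ m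
      ≤ Real.exp (1 - t) := by
  have hn' : (2:ℝ) ≤ (n:ℝ) := by exact_mod_cast hn
  have hm' : (2:ℝ) ≤ (m:ℝ) := by exact_mod_cast hm
  have hn0 : (0:ℝ) < n := by linarith
  have hm0 : (0:ℝ) < m := by linarith
  have hnm0 : (0:ℝ) < (n:ℝ) + (m:ℝ) := by linarith
  set A := Real.sqrt (2 * (m:ℝ) / ((n:ℝ) * ((n:ℝ) + (m:ℝ)))) with hAdef
  set B := Real.sqrt (2 * (n:ℝ) / ((m:ℝ) * ((n:ℝ) + (m:ℝ)))) with hBdef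
  set x := t * A with hxdef
  set y := t * B with hydef
  have hx0 : 0 ≤ x := mul_nonneg ht (Real.sqrt_nonneg _)
  have hy0 : 0 ≤ y := mul_nonneg ht (Real.sqrt_nonneg _)
  have hy1 : y ≤ 1 := by linarith
  have hnx : (n:ℝ) * A = Real.sqrt (2 * (n:ℝ) * (m:ℝ) / ((n:ℝ) + (m:ℝ))) := by
    rw [hAdef, ← Real.sqrt_sq hn0.le, ← Real.sqrt_mul (sq_nonneg _)]
    congr 1
    rw [Real.sqrt_sq hn0.le]
    field_simp
  have hmy : (m:ℝ) * B = Real.sqrt (2 * (n:ℝ) * (m:ℝ) / ((n:ℝ) + (m:ℝ))) := by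
    rw [hBdef, ← Real.sqrt_sq hm0.le, ← Real.sqrt_mul (sq_nonneg _)]
    congr 1
    rw [Real.sqrt_sq hm0.le]
    field_simp
  have hxy : (n:ℝ) * x = (m:ℝ) * y := by
    rw [hxdef, hydef, show (n:ℝ) * (t * A) = t * ((n:ℝ) * A) by ring,
      show (m:ℝ) * (t * B) = t * ((m:ℝ) * B) by ring, hnx, hmy]
  have ht2 : ((n:ℝ) * x) ^ 2 = t ^ 2 * (2 * (n:ℝ) * (m:ℝ) / ((n:ℝ) + (m:ℝ))) := by
    rw [hxdef, show ((n:ℝ) * (t * A)) ^ 2 = t ^ 2 * ((n:ℝ) * A) ^ 2 by ring, hnx,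
      Real.sq_sqrt (by positivity)]
  set u := (n:ℝ) * x with hudef
  have hu0 : 0 ≤ u := mul_nonneg hn0.le hx0
  have h1x : (0:ℝ) < 1 + x := by linarith
  have hnu : (0:ℝ) < (n:ℝ) + u := by linarith
  -- step 1
  have s1 : (1 + x) ^ n ≤ Real.exp (u - u ^ 2 / (2 * ((n:ℝ) + u))) := by
    calc (1 + x) ^ n ≤ (Real.exp (x - x ^ 2 / (2 * (1 + x)))) ^ n :=
          pow_le_pow_left₀ (by linarith) (one_add_le_exp_quad x hx0) n
      _ = Real.exp ((n:ℝ) * (x - x ^ 2 / (2 * (1 + x)))) := (Real.exp_nat_mul _ n).symm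
      _ = Real.exp (u - u ^ 2 / (2 * ((n:ℝ) + u))) := by
          congr 1
          rw [hudef]
          field_simp
  -- step 2
  have s2 : (1 - y) ^ m ≤ Real.exp (-u - u ^ 2 / (4 * (m:ℝ))) := by
    calc (1 - y) ^ m ≤ (Real.exp (-y - y ^ 2 / 4)) ^ m :=
          pow_le_pow_left₀ (by linarith) (one_sub_le_exp_quad y hy0 hy1) m
      _ = Real.exp ((m:ℝ) * (-y - y ^ 2 / 4)) := (Real.exp_nat_mul _ m).symm
      _ = Real.exp (-u - u ^ 2 / (4 * (m:ℝ))) := by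
          congr 1
          rw [hxy]
          field_simp
  have s3 : (1 + x) ^ n * (1 - y) ^ m ≤
      Real.exp ((u - u ^ 2 / (2 * ((n:ℝ) + u))) + (-u - u ^ 2 / (4 * (m:ℝ)))) := by
    rw [Real.exp_add]
    exact mul_le_mul s1 s2 (pow_nonneg (by linarith) m) (Real.exp_pos _).le
  -- step 4 : t ≤ 1 + u²/(2(n+u)) + u²/(4m)
  have hts : t ^ 2 * (2 * (n:ℝ) * (m:ℝ)) = u ^ 2 * ((n:ℝ) + (m:ℝ)) := by
    rw [ht2]
    field_simp
  have hL : t ≤ 1 + u ^ 2 / (2 * ((n:ℝ) + u)) + u ^ 2 / (4 * (m:ℝ)) := by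
    have hLpos : 0 < 1 + u ^ 2 / (2 * ((n:ℝ) + u)) + u ^ 2 / (4 * (m:ℝ)) := by positivity
    have hP : 1 + u ^ 2 / (2 * ((n:ℝ) + u)) + u ^ 2 / (4 * (m:ℝ)) =
        (4 * (m:ℝ) * ((n:ℝ) + u) + 2 * (m:ℝ) * u ^ 2 + u ^ 2 * ((n:ℝ) + u)) /
          (4 * (m:ℝ) * ((n:ℝ) + u)) := by
      field_simp
      ring
    have ht2' : t ^ 2 = u ^ 2 * ((n:ℝ) + (m:ℝ)) / (2 * (n:ℝ) * (m:ℝ)) := by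
      rw [eq_div_iff (by positivity)]
      linarith [hts]
    have hsq : t ^ 2 ≤ (1 + u ^ 2 / (2 * ((n:ℝ) + u)) + u ^ 2 / (4 * (m:ℝ))) ^ 2 := by
      rw [hP, div_pow, ht2', div_le_div_iff₀ (by positivity) (by positivity)]
      linarith [mul_nonneg (mul_nonneg (by linarith : (0:ℝ) ≤ (n:ℝ) - 2)
          (by positivity : (0:ℝ) ≤ (m:ℝ) ^ 3)) (by positivity : (0:ℝ) ≤ u ^ 4),
        (by positivity : (0:ℝ) ≤ (n:ℝ) ^ 3 * (m:ℝ) ^ 3),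
        (by positivity : (0:ℝ) ≤ (n:ℝ) ^ 2 * (m:ℝ) ^ 3 * u),
        (by positivity : (0:ℝ) ≤ (n:ℝ) * (m:ℝ) ^ 3 * u ^ 2),
        (by positivity : (0:ℝ) ≤ (n:ℝ) ^ 2 * (m:ℝ) ^ 3 * u ^ 2),
        (by positivity : (0:ℝ) ≤ (n:ℝ) ^ 2 * (m:ℝ) ^ 2 * u ^ 4),
        (by positivity : (0:ℝ) ≤ (n:ℝ) ^ 3 * (m:ℝ) * u ^ 4),
        (by positivity : (0:ℝ) ≤ (n:ℝ) * (m:ℝ) ^ 2 * u ^ 5),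
        (by positivity : (0:ℝ) ≤ (n:ℝ) ^ 2 * (m:ℝ) * u ^ 5),
        (by positivity : (0:ℝ) ≤ (n:ℝ) * (m:ℝ) * u ^ 6)]
    nlinarith [hsq, ht, hLpos]
  have s4 : (u - u ^ 2 / (2 * ((n:ℝ) + u))) + (-u - u ^ 2 / (4 * (m:ℝ))) ≤ 1 - t := by
    linarith
  exact s3.trans (Real.exp_le_exp.mpr s4)

/-- Estimate (5.13): for integers `n, m ≥ 2`, the rescaled weight
`g(t) = (1 + t√(2m/(n(n+m))))ⁿ(1 - t√(2n/(m(n+m))))ᵐ` (set to `0` where a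
factor is negative) satisfies `g(t) ≤ e^{1-|t|}` for all real `t`. -/
theorem rescaled_weight_bound
    (n m : ℕ) (hn : 2 ≤ n) (hm : 2 ≤ m) (t : ℝ) :
    (if 0 ≤ 1 + t * Real.sqrt (2 * m / (n * (n + m))) ∧
        0 ≤ 1 - t * Real.sqrt (2 * n / (m * (n + m)))
      then (1 + t * Real.sqrt (2 * m / (n * (n + m)))) ^ n *
           (1 - t * Real.sqrt (2 * n / (m * (n + m)))) ^ m
      else 0)
      ≤ Real.exp (1 - |t|) := by
  split_ifs with h
  · rcases le_total 0 t with ht | ht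
    · rw [abs_of_nonneg ht]
      exact aux_bound n m hn hm t ht h.2
    · rw [abs_of_nonpos ht]
      have H := aux_bound m n hm hn (-t) (by linarith)
        (by rw [show ((m:ℝ) + (n:ℝ)) = ((n:ℝ) + (m:ℝ)) from add_comm _ _, neg_mul,
              sub_neg_eq_add]
            exact h.1)
      rw [show ((m:ℝ) + (n:ℝ)) = ((n:ℝ) + (m:ℝ)) from add_comm _ _, neg_mul, neg_mul,
        ← sub_eq_add_neg, sub_neg_eq_add, sub_neg_eq_add, mul_comm] at H
      rw [sub_neg_eq_add]
      exact H
  · exact (Real.exp_pos _).le
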